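/- Let ν ≥ 1 be an integer and z ∈ [0,1] a real number. Define, for η ∈ [−1,1], ψ_z(η) = (2/π)·[ z + (1−z)·( (2η)^{2ν−2}/binom(2ν−1, ν−1) + Σ_{j=1}^{ν−1} (2·binom(2j−1, j−1)/binom(2ν−1, ν−1))·(2η)^{2ν−2−2j} ) ]·√(1−η²). Then ψ_z(η) ≥ 0 for all η ∈ [−1,1], and ∫_{−1}^{1} ψ_z(η) dη = 1; that is, ψ_z is the density of a probability measure on [−1,1] (the rescaled equilibrium measure, a convex combination of the semicircle density at z = 1 and the monomial-weight equilibrium density at z = 0). -/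

import Mathlib

set_option maxHeartbeats 1000000

open Real Finset intervalIntegral



lemma cb_cast_succ (k : ℕ) : ((k:ℝ)+1) * (Nat.centralBinom (k+1) : ℝ)
    = 2*(2*(k:ℝ)+1) * (Nat.centralBinom k : ℝ) := by
  have := Nat.succ_mul_centralBinom_succ k
  exact_mod_cast congrArg (Nat.cast (R := ℝ)) this

lemma cat_cast (k : ℕ) : ((k:ℝ)+1) * (catalan k : ℝ) = (Nat.centralBinom k : ℝ) := by
  have := succ_mul_catalan_eq_centralBinom k
  exact_mod_cast congrArg (Nat.cast (R := ℝ)) this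

lemma prodForm (k : ℕ) : ∏ i ∈ Finset.range k, ((2*(i:ℝ)+1)/(2*(i:ℝ)+2))
    = (Nat.centralBinom k : ℝ) / 4^k := by
  induction k with
  | zero => simp [Nat.centralBinom]
  | succ k ih =>
    rw [Finset.prod_range_succ, ih]
    have h := cb_cast_succ k
    have h1 : ((k:ℝ)+1) ≠ 0 := by positivity
    have h2 : (4:ℝ)^k ≠ 0 := by positivity
    field_simp
    linear_combination (-2*(4:ℝ)^k) * h

lemma choose_cast (n : ℕ) : ((n:ℝ)+1) * (Nat.choose (2*n+1) n : ℝ)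
    = (2*(n:ℝ)+1) * (Nat.centralBinom n : ℝ) := by
  have h1 : (2*n+1) * Nat.choose (2*n) n = Nat.choose (2*n+1) (n+1) * (n+1) :=
    Nat.add_one_mul_choose_eq (2*n) n
  have h2 : Nat.choose (2*n+1) (n+1) = Nat.choose (2*n+1) n := by
    have := Nat.choose_symm (n := 2*n+1) (k := n+1) (by omega)
    simpa [show 2*n+1-(n+1) = n by omega] using this.symm
  rw [h2] at h1
  have h3 : (2*(n:ℝ)+1) * (Nat.centralBinom n : ℝ)
      = (Nat.choose (2*n+1) n : ℝ) * ((n:ℝ)+1) := by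
    rw [Nat.centralBinom]; exact_mod_cast congrArg (Nat.cast (R := ℝ)) h1
  linear_combination (-1:ℝ) * h3


lemma conv_id (n : ℕ) :
    ∑ j ∈ Finset.range (n+1), (Nat.centralBinom j : ℝ) * (catalan (n-j) : ℝ)
      = (Nat.choose (2*n+1) n : ℝ) := by
  set G : ℕ → ℝ := fun j =>
    (j:ℝ)*(2*(n:ℝ)+1-2*(j:ℝ))/((n:ℝ)+1) * (Nat.centralBinom j : ℝ) * (catalan (n-j) : ℝ)
    with hG
  have step : ∀ j ∈ Finset.range n,
      (Nat.centralBinom j : ℝ) * (catalan (n-j) : ℝ) = G (j+1) - G j := by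
    intro j hj
    rw [Finset.mem_range] at hj
    obtain ⟨m, hm⟩ : ∃ m, n - j = m + 1 := ⟨n - j - 1, by omega⟩
    have hm2 : n - (j+1) = m := by omega
    have hn : (n:ℝ) = (j:ℝ) + (m:ℝ) + 1 := by
      have : n = j + m + 1 := by omega
      exact_mod_cast congrArg (Nat.cast (R := ℝ)) this
    simp only [hG, hm, hm2]
    have e1 : (catalan m : ℝ) = (Nat.centralBinom m : ℝ) / ((m:ℝ)+1) := by
      have := cat_cast m; field_simp; linarith [this]
    have e2 : (catalan (m+1) : ℝ)
        = 2*(2*(m:ℝ)+1)*(Nat.centralBinom m : ℝ) / (((m:ℝ)+1)*((m:ℝ)+2)) := by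
      have h1 := cat_cast (m+1)
      have h2 := cb_cast_succ m
      push_cast at h1
      field_simp
      nlinarith [h1, h2]
    have e3 : (Nat.centralBinom (j+1) : ℝ)
        = 2*(2*(j:ℝ)+1)*(Nat.centralBinom j : ℝ) / ((j:ℝ)+1) := by
      have := cb_cast_succ j; field_simp; linarith [this]
    rw [e1, e2, e3, hn]
    push_cast
    have d1 : ((j:ℝ)+1) ≠ 0 := by positivity
    have d2 : ((m:ℝ)+1) ≠ 0 := by positivity
    have d3 : ((m:ℝ)+2) ≠ 0 := by positivity
    have d4 : ((j:ℝ)+(m:ℝ)+1+1) ≠ 0 := by positivity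
    field_simp
    ring
  rw [Finset.sum_range_succ, Finset.sum_congr rfl step, Finset.sum_range_sub G]
  have hG0 : G 0 = 0 := by simp [hG]
  have hGn : G n = (n:ℝ)/((n:ℝ)+1) * (Nat.centralBinom n : ℝ) := by
    simp [hG]
  rw [hG0, hGn]
  have hc := choose_cast n
  have d : ((n:ℝ)+1) ≠ 0 := by positivity
  field_simp
  rw [Nat.sub_self, catalan_zero, Nat.cast_one]
  linear_combination (-1:ℝ) * hc


lemma sin_pow_int (k : ℕ) :
    ∫ x in (-(π/2))..(π/2), Real.sin x ^ (2*k) = π * (Nat.centralBinom k : ℝ) / 4^k := by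
  have hint : ∀ a b : ℝ, IntervalIntegrable (fun x => Real.sin x ^ (2*k)) MeasureTheory.volume a b :=
    fun a b => (Real.continuous_sin.pow _).intervalIntegrable a b
  have h1 : ∫ x in (-(π/2))..(0:ℝ), Real.sin x ^ (2*k)
      = ∫ x in (0:ℝ)..(π/2), Real.sin x ^ (2*k) := by
    have := intervalIntegral.integral_comp_neg (a := (0:ℝ)) (b := π/2)
      (fun x => Real.sin x ^ (2*k))
    simp only [Real.sin_neg, Even.neg_pow (even_two_mul k), neg_zero] at this
    rw [← this]
  have h2 : ∫ x in (π/2)..π, Real.sin x ^ (2*k)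
      = ∫ x in (0:ℝ)..(π/2), Real.sin x ^ (2*k) := by
    have := intervalIntegral.integral_comp_sub_left (a := (0:ℝ)) (b := π/2)
      (fun x => Real.sin x ^ (2*k)) π
    simp only [Real.sin_pi_sub, sub_zero] at this
    rw [show π - π/2 = π/2 by ring] at this
    exact this.symm
  have h3 : (∫ x in (-(π/2))..(0:ℝ), Real.sin x ^ (2*k))
      + ∫ x in (0:ℝ)..(π/2), Real.sin x ^ (2*k)
      = ∫ x in (-(π/2))..(π/2), Real.sin x ^ (2*k) :=
    intervalIntegral.integral_add_adjacent_intervals (hint _ _) (hint _ _)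
  have h4 : (∫ x in (0:ℝ)..(π/2), Real.sin x ^ (2*k))
      + ∫ x in (π/2)..π, Real.sin x ^ (2*k)
      = ∫ x in (0:ℝ)..π, Real.sin x ^ (2*k) :=
    intervalIntegral.integral_add_adjacent_intervals (hint _ _) (hint _ _)
  have h5 := integral_sin_pow_even k
  have h6 := prodForm k
  rw [h6] at h5
  rw [← h3, h1]
  linear_combination h4 - h2 + h5


lemma sqrt_cont : Continuous (fun x : ℝ => Real.sqrt (1 - x^2)) :=
  Real.continuous_sqrt.comp (by fun_prop)

lemma I_val (k : ℕ) :
    ∫ x in (-1:ℝ)..1, x^(2*k) * Real.sqrt (1-x^2)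
      = π * (Nat.centralBinom k : ℝ) / (4^k * (2*(k:ℝ)+2)) := by
  have hg : Continuous (fun u : ℝ => u^(2*k) * Real.sqrt (1-u^2)) :=
    (continuous_pow _).mul sqrt_cont
  have hsubst := intervalIntegral.integral_comp_smul_deriv
    (a := -(π/2)) (b := π/2) (f := Real.sin) (f' := Real.cos)
    (g := fun u => u^(2*k) * Real.sqrt (1-u^2))
    (fun x _ => Real.hasDerivAt_sin x) Real.continuousOn_cos hg
  rw [Real.sin_neg, Real.sin_pi_div_two] at hsubst
  have hle : -(π/2) ≤ π/2 := by linarith [Real.pi_pos]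
  have hcongr : ∫ x in (-(π/2))..(π/2), Real.cos x • ((fun u => u^(2*k) * Real.sqrt (1-u^2)) ∘ Real.sin) x
      = ∫ x in (-(π/2))..(π/2), (Real.sin x ^ (2*k) - Real.sin x ^ (2*(k+1))) := by
    apply intervalIntegral.integral_congr
    intro x hx
    rw [Set.uIcc_of_le hle] at hx
    have hcos : 0 ≤ Real.cos x := Real.cos_nonneg_of_mem_Icc hx
    simp only [Function.comp, smul_eq_mul]
    rw [show (1:ℝ) - Real.sin x^2 = Real.cos x^2 from by rw [Real.cos_sq']
        , Real.sqrt_sq hcos]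
    have : Real.sin x ^ (2*(k+1)) = Real.sin x ^ (2*k) * Real.sin x ^ 2 := by
      rw [← pow_add]; ring_nf
    rw [this, Real.sin_sq x]
    ring
  rw [← hsubst, hcongr]
  rw [intervalIntegral.integral_sub (f := fun x => Real.sin x ^ (2*k))
    (g := fun x => Real.sin x ^ (2*(k+1))) ((Real.continuous_sin.pow _).intervalIntegrable _ _)
    ((Real.continuous_sin.pow _).intervalIntegrable _ _)]
  rw [sin_pow_int k, sin_pow_int (k+1)]
  have hcb := cb_cast_succ k
  have d1 : ((k:ℝ)+1) ≠ 0 := by positivity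
  have d2 : (4:ℝ)^k ≠ 0 := by positivity
  have d3 : (π:ℝ) ≠ 0 := Real.pi_ne_zero
  push_cast
  rw [pow_succ]
  field_simp
  linear_combination (-2:ℝ) * hcb

lemma J_val (k : ℕ) :
    ∫ x in (-1:ℝ)..1, (2*x)^(2*k) * Real.sqrt (1-x^2) = π/2 * (catalan k : ℝ) := by
  have h1 : ∀ x : ℝ, (2*x)^(2*k) * Real.sqrt (1-x^2)
      = (4:ℝ)^k * (x^(2*k) * Real.sqrt (1-x^2)) := by
    intro x
    rw [mul_pow, show ((2:ℝ))^(2*k) = 4^k from by rw [pow_mul]; norm_num]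
    ring
  simp only [h1]
  rw [intervalIntegral.integral_const_mul, I_val k]
  have hcat := cat_cast k
  have d1 : ((k:ℝ)+1) ≠ 0 := by positivity
  have d2 : (4:ℝ)^k ≠ 0 := by positivity
  rw [← hcat]
  field_simp



lemma two_choose (j : ℕ) (hj : 1 ≤ j) :
    2 * Nat.choose (2*j-1) (j-1) = Nat.centralBinom j := by
  obtain ⟨i, rfl⟩ : ∃ i, j = i + 1 := ⟨j - 1, by omega⟩
  have h1 : 2*(i+1)-1 = 2*i+1 := by omega
  have h2 : (i+1)-1 = i := by omega
  rw [h1, h2, Nat.centralBinom, show 2*(i+1) = (2*i+1)+1 by omega,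
    Nat.choose_succ_succ (2*i+1) i]
  have h3 : Nat.choose (2*i+1) (i+1) = Nat.choose (2*i+1) i := by
    have := Nat.choose_symm (n := 2*i+1) (k := i+1) (by omega)
    simpa [show 2*i+1-(i+1) = i by omega] using this.symm
  simp only [Nat.succ_eq_add_one] at h3 ⊢
  omega

/-- Let `ν ≥ 1` and `z ∈ [0,1]`.  The rescaled equilibrium
density
`ψ_z(η) = (2/π)·[z + (1−z)·((2η)^{2ν−2}/binom(2ν−1,ν−1) + Σ_{j=1}^{ν−1} (2·binom(2j−1,j−1)/binom(2ν−1,ν−1))·(2η)^{2ν−2−2j})]·√(1−η²)`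
is nonnegative on `[−1,1]` and integrates to `1` over `[−1,1]`: it is the density
of a probability measure on `[−1,1]` (a convex combination of the semicircle
density at `z = 1` and the monomial-weight equilibrium density at `z = 0`). -/
theorem equilibrium_density_probability
    (ν : ℕ) (hν : 1 ≤ ν) (z : ℝ) (hz : z ∈ Set.Icc (0 : ℝ) 1)
    (ψ : ℝ → ℝ)
    (hψ : ∀ η : ℝ, ψ η = (2 / Real.pi) *
      (z + (1 - z) *
        ((2 * η) ^ (2 * ν - 2) / (Nat.choose (2 * ν - 1) (ν - 1) : ℝ)
          + ∑ j ∈ Finset.Icc 1 (ν - 1),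
              (2 * (Nat.choose (2 * j - 1) (j - 1) : ℝ) /
                  (Nat.choose (2 * ν - 1) (ν - 1) : ℝ)) *
                (2 * η) ^ (2 * ν - 2 - 2 * j))) *
      Real.sqrt (1 - η ^ 2)) :
    (∀ η ∈ Set.Icc (-1 : ℝ) 1, 0 ≤ ψ η) ∧ (∫ η in (-1 : ℝ)..1, ψ η) = 1 := by
  obtain ⟨n, rfl⟩ : ∃ n, ν = n + 1 := ⟨ν - 1, by omega⟩
  obtain ⟨hz0, hz1⟩ := hz
  have e1 : 2 * (n+1) - 2 = 2 * n := by omega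
  have e2 : 2 * (n+1) - 1 = 2 * n + 1 := by omega
  have e3 : (n+1) - 1 = n := by omega
  simp only [e1, e2, e3] at hψ
  set C : ℝ := (Nat.choose (2*n+1) n : ℝ) with hCdef
  have hC : 0 < C := by
    rw [hCdef]
    exact_mod_cast Nat.choose_pos (by omega : n ≤ 2*n+1)
  have hπ : (0:ℝ) < π := Real.pi_pos
  -- nonnegativity
  have hnonneg : ∀ η ∈ Set.Icc (-1 : ℝ) 1, 0 ≤ ψ η := by
    intro η _
    rw [hψ η]
    apply mul_nonneg (mul_nonneg (by positivity) ?_) (Real.sqrt_nonneg _)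
    apply add_nonneg hz0
    apply mul_nonneg (by linarith)
    apply add_nonneg
    · apply div_nonneg _ hC.le
      exact (Even.pow_nonneg ⟨n, by ring⟩ _)
    · apply Finset.sum_nonneg
      intro j hj
      rw [Finset.mem_Icc] at hj
      apply mul_nonneg
      · apply div_nonneg _ hC.le; positivity
      · exact Even.pow_nonneg ⟨n - j, by omega⟩ _
  refine ⟨hnonneg, ?_⟩
  -- rewrite ψ as a linear combination of moment functions
  set g : ℕ → ℝ → ℝ := fun m x => (2*x)^(2*m) * Real.sqrt (1-x^2) with hgdef
  have hgc : ∀ m, Continuous (g m) := fun m => ((continuous_const.mul continuous_id).pow _).mul sqrt_cont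
  have hgi : ∀ m, IntervalIntegrable (g m) MeasureTheory.volume (-1) 1 :=
    fun m => (hgc m).intervalIntegrable _ _
  have hψ' : ∀ η : ℝ, ψ η = (2/π * z) * g 0 η +
      ((2/π * (1-z) / C) * g n η +
        ∑ j ∈ Finset.Icc 1 n,
          ((2/π * (1-z)) * (2 * (Nat.choose (2*j-1) (j-1) : ℝ) / C)) * g (n-j) η) := by
    intro η
    rw [hψ η]
    have hsum : ∑ j ∈ Finset.Icc 1 n,
        (2 * (Nat.choose (2*j-1) (j-1) : ℝ) / C) * (2*η) ^ (2*n - 2*j)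
        = ∑ j ∈ Finset.Icc 1 n,
          (2 * (Nat.choose (2*j-1) (j-1) : ℝ) / C) * (2*η) ^ (2*(n-j)) := by
      apply Finset.sum_congr rfl
      intro j hj
      rw [Finset.mem_Icc] at hj
      rw [show 2*n - 2*j = 2*(n-j) by omega]
    rw [hsum]
    have hsum2 : ∑ j ∈ Finset.Icc 1 n,
        ((2/π * (1-z)) * (2 * (Nat.choose (2*j-1) (j-1) : ℝ) / C)) * g (n-j) η
        = (2/π * (1-z) * Real.sqrt (1-η^2)) * ∑ j ∈ Finset.Icc 1 n,
          (2 * (Nat.choose (2*j-1) (j-1) : ℝ) / C) * (2*η) ^ (2*(n-j)) := by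
      rw [Finset.mul_sum]
      apply Finset.sum_congr rfl
      intro j hj
      simp only [hgdef]
      ring
    rw [hsum2]
    simp only [hgdef, Nat.mul_zero, pow_zero, one_mul]
    ring
  simp only [hψ']
  have hintsum : IntervalIntegrable (fun η => ∑ j ∈ Finset.Icc 1 n,
      ((2/π * (1-z)) * (2 * (Nat.choose (2*j-1) (j-1) : ℝ) / C)) * g (n-j) η)
      MeasureTheory.volume (-1) 1 :=
    (continuous_finset_sum (Finset.Icc 1 n)
      (fun j _ => continuous_const.mul (hgc (n-j)))).intervalIntegrable _ _
  rw [intervalIntegral.integral_add ((hgi 0).const_mul _)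
    (((hgi n).const_mul _).add hintsum)]
  rw [intervalIntegral.integral_add ((hgi n).const_mul _) hintsum]
  rw [intervalIntegral.integral_finset_sum (fun j _ => ((hgi (n-j)).const_mul _))]
  simp only [intervalIntegral.integral_const_mul]
  have hJ : ∀ m : ℕ, ∫ x in (-1:ℝ)..1, g m x = π/2 * (catalan m : ℝ) := fun m => J_val m
  simp only [hJ]
  -- now pure algebra
  have hterm : ∀ j ∈ Finset.Icc 1 n,
      (2/π * (1-z)) * (2 * (Nat.choose (2*j-1) (j-1) : ℝ) / C) * (π/2 * (catalan (n-j) : ℝ))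
      = (1-z)/C * ((Nat.centralBinom j : ℝ) * (catalan (n-j) : ℝ)) := by
    intro j hj
    rw [Finset.mem_Icc] at hj
    have h2c : (2 * (Nat.choose (2*j-1) (j-1) : ℝ)) = (Nat.centralBinom j : ℝ) := by
      exact_mod_cast congrArg (Nat.cast (R := ℝ)) (two_choose j hj.1)
    rw [← h2c]
    field_simp
  rw [Finset.sum_congr rfl hterm, ← Finset.mul_sum]
  have hkey : (catalan n : ℝ) + ∑ j ∈ Finset.Icc 1 n,
      (Nat.centralBinom j : ℝ) * (catalan (n-j) : ℝ) = C := by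
    have hsplit : Finset.range (n+1) = insert 0 (Finset.Icc 1 n) := by
      ext x; simp [Finset.mem_range, Finset.mem_Icc]; omega
    have := conv_id n
    rw [hsplit, Finset.sum_insert (by simp)] at this
    simpa [Nat.centralBinom_zero] using this
  have hcat0 : ((catalan 0 : ℕ) : ℝ) = 1 := by norm_num [catalan_zero]
  rw [hcat0]
  calc 2/π * z * (π/2 * 1) + (2/π * (1-z)/C * (π/2 * (catalan n : ℝ))
        + (1-z)/C * ∑ j ∈ Finset.Icc 1 n, (Nat.centralBinom j : ℝ) * (catalan (n-j) : ℝ))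
      = z + (1-z)/C * ((catalan n : ℝ) + ∑ j ∈ Finset.Icc 1 n,
          (Nat.centralBinom j : ℝ) * (catalan (n-j) : ℝ)) := by
        field_simp
    _ = z + (1-z)/C * C := by rw [hkey]
    _ = 1 := by field_simp; ring
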